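/- Let φ = (√5 − 1)/2, let v₁ be a single-minded valuation on Fin m with desired bundle S₀ and value w ≥ 0 (i.e., v₁(S) = w if S₀ ⊆ S and 0 otherwise), and let v₂ be an XOS valuation on Fin m. Define the allocation: if w ≥ φ·v₂(Fin m), bidder 1 receives S₀ and bidder 2 receives (S₀)ᶜ; otherwise bidder 1 receives ∅ and bidder 2 receives all of Fin m. Then the welfare of this allocation is at least φ times the optimal welfare; that is, its welfare is at least φ·(v₁(A) + v₂(B)) for every pair of disjoint bundles A, B. -/
import Mathlib


/-- A valuation is single-minded if there are `w ≥ 0` and a bundle `T` such that it is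
`w` on bundles containing `T` and `0` otherwise. -/
def IsSingleMinded {m : ℕ} (v : Finset (Fin m) → ℝ) : Prop :=
  ∃ (w : ℝ) (T : Finset (Fin m)), 0 ≤ w ∧ ∀ S : Finset (Fin m), v S = if T ⊆ S then w else 0

/-- A valuation is XOS if it is the maximum of a nonempty finite family of nonnegative
additive clauses. -/
def IsXOS {m : ℕ} (v : Finset (Fin m) → ℝ) : Prop :=
  ∃ (𝒞 : Finset (Fin m → ℝ)) (h𝒞 : 𝒞.Nonempty),
    (∀ c ∈ 𝒞, ∀ j : Fin m, 0 ≤ c j) ∧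
    ∀ S : Finset (Fin m), v S = 𝒞.sup' h𝒞 fun c => ∑ j ∈ S, c j

/-- For a subcollection `H` of bundles, the binary XOS valuation
`v_H(S) = max_{H ∈ H} |S ∩ H|` (and `0` if `H` is empty). -/
def vFam {m : ℕ} (H : Finset (Finset (Fin m))) : Finset (Fin m) → ℝ :=
  fun S => ((H.sup fun Hs => (S ∩ Hs).card : ℕ) : ℝ)

/-- The simple allocation rule giving the single-minded bidder her desired bundle iff her
value is at least `φ = (√5 - 1)/2` times the XOS bidder's value for all items achieves a
`φ`-approximation to the optimal welfare. -/
theorem simple_rule_golden_ratio_approx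
    (m : ℕ) (S₀ : Finset (Fin m)) (w : ℝ) (hw : 0 ≤ w)
    (v₁ : Finset (Fin m) → ℝ) (hv₁ : ∀ S : Finset (Fin m), v₁ S = if S₀ ⊆ S then w else 0)
    (v₂ : Finset (Fin m) → ℝ) (hv₂ : IsXOS v₂) :
    ∀ A B : Finset (Fin m), Disjoint A B →
      (Real.sqrt 5 - 1) / 2 * (v₁ A + v₂ B) ≤
        if (Real.sqrt 5 - 1) / 2 * v₂ (Finset.univ : Finset (Fin m)) ≤ w then
          v₁ S₀ + v₂ S₀ᶜ
        else v₁ ∅ + v₂ (Finset.univ : Finset (Fin m)) := by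
  obtain ⟨𝒞, h𝒞, hpos, hval⟩ := hv₂
  have hmono : ∀ S T : Finset (Fin m), S ⊆ T → v₂ S ≤ v₂ T := by
    intro S T hST
    rw [hval, hval]
    apply Finset.sup'_le
    intro c hc
    exact le_trans (Finset.sum_le_sum_of_subset_of_nonneg hST (fun j _ _ => hpos c hc j))
      (Finset.le_sup' _ hc)
  have hnn : ∀ S, 0 ≤ v₂ S := by
    intro S
    rw [hval]
    obtain ⟨c, hc⟩ := h𝒞
    calc (0:ℝ) ≤ ∑ j ∈ S, c j := Finset.sum_nonneg fun j _ => hpos c hc j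
    _ ≤ _ := Finset.le_sup' _ hc
  set φ := (Real.sqrt 5 - 1)/2 with hφ
  have hs5 : Real.sqrt 5 ^ 2 = 5 := Real.sq_sqrt (by norm_num)
  have hs5' : (1:ℝ) ≤ Real.sqrt 5 := by nlinarith [Real.sqrt_nonneg 5]
  have hφ0 : 0 ≤ φ := by rw [hφ]; linarith
  have hφ1 : φ ≤ 1 := by rw [hφ]; nlinarith [Real.sqrt_nonneg 5]
  have hφ2 : φ^2 + φ = 1 := by rw [hφ]; nlinarith
  intro A B hAB
  by_cases hcase : φ * v₂ Finset.univ ≤ w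
  · rw [if_pos hcase]
    by_cases hS0 : S₀ ⊆ A
    · have hBc : B ⊆ S₀ᶜ := fun x hx =>
        Finset.mem_compl.mpr fun hxS => (Finset.disjoint_left.mp hAB (hS0 hxS) hx)
      have h1 : v₁ A = w := by rw [hv₁]; exact if_pos hS0
      have h2 : v₁ S₀ = w := by rw [hv₁]; exact if_pos (subset_refl _)
      have hle := hmono B S₀ᶜ hBc
      nlinarith [hnn B]
    · have h1 : v₁ A = 0 := by rw [hv₁]; exact if_neg hS0
      have h2 : v₁ S₀ = w := by rw [hv₁]; exact if_pos (subset_refl _)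
      have hB : v₂ B ≤ v₂ Finset.univ := hmono B _ (Finset.subset_univ B)
      nlinarith [hnn S₀ᶜ, hnn B]
  · rw [if_neg hcase]
    push_neg at hcase
    have hA : v₁ A ≤ w := by rw [hv₁]; split <;> linarith
    have hB : v₂ B ≤ v₂ Finset.univ := hmono B _ (Finset.subset_univ B)
    have h0 : 0 ≤ v₁ ∅ := by rw [hv₁]; split <;> linarith
    nlinarith [hnn Finset.univ, hnn B]
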